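/- (Conditional one-shot mutual covering lemma.) Fix a joint distribution P_{UST} and let (U, S₁,…,S_M, T₁,…,T_L) be distributed as P_U ⊗ (P_{S|U})^{⊗M} ⊗ (P_{T|U})^{⊗L}, i.e., given U the S_m are i.i.d. P_{S|U} and the T_l are i.i.d. P_{T|U}, with the two families conditionally independent given U. Then for all γ > 0 and measurable F: P[∩_{m=1}^{M} ∩_{l=1}^{L} {(U, S_m, T_l) ∉ F}] ≤ P[{(U,S,T) ∉ F} ∪ {ı_{S;T|U}(S;T|U) > log(ML) − 2γ}] + (min{M,L} − 1)/(ML(exp(−γ) − exp(−2γ))) + exp(−exp(γ)), where (U,S,T) ∼ P_{UST} and ı_{S;T|U}(s;t|u) = log(dP_{T|U=u,S=s}/dP_{T|U=u})(t). -/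

import Mathlib

open MeasureTheory ProbabilityTheory Set
open scoped ENNReal

namespace OSC

variable {𝓢 𝓣 : Type*} [MeasurableSpace 𝓢] [MeasurableSpace 𝓣]

lemma map_eval_pi {ι : Type*} [Fintype ι] (ν : Measure 𝓣) [IsProbabilityMeasure ν] (l : ι) :
    (Measure.pi (fun _ : ι => ν)).map (Function.eval l) = ν := by
  classical
  ext s hs
  rw [Measure.map_apply (measurable_pi_apply l) hs]
  have hpre : Function.eval l ⁻¹' s
      = Set.pi Set.univ (fun j => if j = l then s else Set.univ) := by
    ext t
    simp only [Set.mem_preimage, Set.mem_univ_pi, Function.eval]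
    constructor
    · intro h j
      by_cases hj : j = l <;> simp [hj, h]
    · intro h
      have := h l
      simpa using this
  rw [hpre, Measure.pi_pi]
  have : ∀ j : ι, ν (if j = l then s else Set.univ) = if j = l then ν s else 1 := by
    intro j; by_cases hj : j = l <;> simp [hj]
  simp_rw [this]
  simp [Finset.prod_ite_eq']

lemma lintegral_eval {ι : Type*} [Fintype ι] (ν : Measure 𝓣) [IsProbabilityMeasure ν] (l : ι)
    {f : 𝓣 → ℝ≥0∞} (hf : Measurable f) :
    ∫⁻ t, f (t l) ∂(Measure.pi (fun _ : ι => ν)) = ∫⁻ x, f x ∂ν := by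
  calc ∫⁻ t, f (t l) ∂(Measure.pi (fun _ : ι => ν))
      = ∫⁻ x, f x ∂((Measure.pi (fun _ : ι => ν)).map (Function.eval l)) :=
        (lintegral_map hf (measurable_pi_apply l)).symm
    _ = ∫⁻ x, f x ∂ν := by rw [map_eval_pi]

lemma ae_eval {ι : Type*} [Fintype ι] (ν : Measure 𝓣) [IsProbabilityMeasure ν] (l : ι)
    {p : 𝓣 → Prop} (hmp : MeasurableSet {x | p x}) (hae : ∀ᵐ x ∂ν, p x) :
    ∀ᵐ t ∂(Measure.pi (fun _ : ι => ν)), p (t l) := by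
  rw [← map_eval_pi ν l] at hae
  exact (ae_map_iff (measurable_pi_apply l).aemeasurable hmp).mp hae

lemma map_eval_prod_eval_pi {ι : Type*} [Fintype ι] [DecidableEq ι]
    (ν : Measure 𝓣) [IsProbabilityMeasure ν] {l l' : ι} (hll : l ≠ l') :
    (Measure.pi (fun _ : ι => ν)).map (fun t => (t l, t l')) = ν.prod ν := by
  refine (Measure.prod_eq fun s t hs ht => ?_).symm
  rw [Measure.map_apply (by fun_prop) (hs.prod ht)]
  have hpre : (fun u : ι → 𝓣 => (u l, u l')) ⁻¹' (s ×ˢ t)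
      = Set.pi Set.univ (fun j => if j = l then s else if j = l' then t else Set.univ) := by
    ext u
    simp only [Set.mem_preimage, Set.mem_prod, Set.mem_univ_pi]
    constructor
    · rintro ⟨h1, h2⟩ j
      by_cases hjl : j = l
      · simp [hjl, h1]
      · by_cases hjl' : j = l' <;> simp [hjl, hjl', h1, h2, Ne.symm hll]
    · intro h
      refine ⟨by simpa using h l, ?_⟩
      have := h l'
      simpa [(Ne.symm hll)] using this
  rw [hpre, Measure.pi_pi]
  have : ∀ j : ι, ν (if j = l then s else if j = l' then t else Set.univ)
      = (if j = l then ν s else 1) * (if j = l' then ν t else 1) := by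
    intro j
    by_cases hjl : j = l
    · subst hjl; simp [hll]
    · by_cases hjl' : j = l' <;> simp [hjl, hjl', Ne.symm hll]
  simp_rw [this, Finset.prod_mul_distrib]
  simp [Finset.prod_ite_eq']

lemma lintegral_eval_mul_eval {ι : Type*} [Fintype ι] [DecidableEq ι]
    (ν : Measure 𝓣) [IsProbabilityMeasure ν] {l l' : ι} (hll : l ≠ l')
    {f g : 𝓣 → ℝ≥0∞} (hf : Measurable f) (hg : Measurable g) :
    ∫⁻ t, f (t l) * g (t l') ∂(Measure.pi (fun _ : ι => ν))
      = (∫⁻ x, f x ∂ν) * ∫⁻ x, g x ∂ν := by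
  have hm : Measurable (fun u : ι → 𝓣 => (u l, u l')) := by fun_prop
  calc ∫⁻ t, f (t l) * g (t l') ∂(Measure.pi (fun _ : ι => ν))
      = ∫⁻ q : 𝓣 × 𝓣, f q.1 * g q.2
          ∂((Measure.pi (fun _ : ι => ν)).map (fun t => (t l, t l'))) := by
        rw [lintegral_map (by fun_prop) hm]
    _ = ∫⁻ q : 𝓣 × 𝓣, f q.1 * g q.2 ∂(ν.prod ν) := by
        rw [map_eval_prod_eval_pi ν hll]
    _ = (∫⁻ x, f x ∂ν) * ∫⁻ x, g x ∂ν :=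
        lintegral_prod_mul hf.aemeasurable hg.aemeasurable

lemma real_key {a b γ : ℝ} (ha0 : 0 ≤ a) (ha1 : a ≤ 1) (hb0 : 0 ≤ b) (hb1 : b ≤ 1)
    (M : ℕ) (hMb : Real.exp γ * b ≤ M * a) :
    (1 - a) ^ M ≤ 1 - b + Real.exp (-Real.exp γ) := by
  have h1 : (1 - a) ^ M ≤ Real.exp (-(M * a)) := by
    have hea : 1 - a ≤ Real.exp (-a) := by nlinarith [Real.add_one_le_exp (-a)]
    calc (1 - a) ^ M ≤ Real.exp (-a) ^ M := pow_le_pow_left₀ (by linarith) hea M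
      _ = Real.exp (-(M * a)) := by
          rw [← Real.exp_nat_mul]; ring_nf
  have h2 : Real.exp (-(M * a)) ≤ Real.exp (-(Real.exp γ * b)) :=
    Real.exp_le_exp.mpr (by linarith)
  have h3 : Real.exp (-(Real.exp γ * b)) ≤ 1 - b + Real.exp (-Real.exp γ) := by
    have hc := convexOn_exp.2 (Set.mem_univ (-Real.exp γ)) (Set.mem_univ (0:ℝ))
      hb0 (show (0:ℝ) ≤ 1 - b by linarith) (by ring : b + (1 - b) = 1)
    simp only [smul_eq_mul, mul_zero, add_zero, Real.exp_zero, mul_one] at hc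
    have h4 : Real.exp (b * -Real.exp γ) ≤ b * Real.exp (-Real.exp γ) + (1 - b) := hc
    have hb' : b * Real.exp (-Real.exp γ) ≤ Real.exp (-Real.exp γ) := by
      nlinarith [Real.exp_pos (-Real.exp γ)]
    calc Real.exp (-(Real.exp γ * b)) = Real.exp (b * -Real.exp γ) := by ring_nf
      _ ≤ b * Real.exp (-Real.exp γ) + (1 - b) := h4
      _ ≤ 1 - b + Real.exp (-Real.exp γ) := by linarith
  linarith


lemma ennreal_key {h x : ℝ≥0∞} (hh : h ≤ 1) (hx : x ≤ 1) {γ : ℝ} (M : ℕ)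
    (hkey : ENNReal.ofReal (Real.exp γ) * x ≤ M * h) :
    (1 - h) ^ M ≤ 1 - x + ENNReal.ofReal (Real.exp (-Real.exp γ)) := by
  have hhfin : h ≠ ∞ := (lt_of_le_of_lt hh ENNReal.one_lt_top).ne
  have hxfin : x ≠ ∞ := (lt_of_le_of_lt hx ENNReal.one_lt_top).ne
  set a := h.toReal with ha
  set b := x.toReal with hb
  have ha0 : 0 ≤ a := ENNReal.toReal_nonneg
  have hb0 : 0 ≤ b := ENNReal.toReal_nonneg
  have ha1 : a ≤ 1 := by
    simpa using ENNReal.toReal_mono (by simp) hh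
  have hb1 : b ≤ 1 := by
    simpa using ENNReal.toReal_mono (by simp) hx
  have hMb : Real.exp γ * b ≤ M * a := by
    have := ENNReal.toReal_mono (by
      exact ENNReal.mul_ne_top (by simp) hhfin) hkey
    rw [ENNReal.toReal_mul, ENNReal.toReal_mul, ENNReal.toReal_ofReal (Real.exp_pos γ).le] at this
    simpa using this
  have hmain := real_key ha0 ha1 hb0 hb1 M hMb
  have h1h : (1 : ℝ≥0∞) - h = ENNReal.ofReal (1 - a) := by
    rw [ENNReal.ofReal_sub _ ha0, ENNReal.ofReal_one, ENNReal.ofReal_toReal hhfin]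
  have h1x : (1 : ℝ≥0∞) - x = ENNReal.ofReal (1 - b) := by
    rw [ENNReal.ofReal_sub _ hb0, ENNReal.ofReal_one, ENNReal.ofReal_toReal hxfin]
  rw [h1h, h1x, ← ENNReal.ofReal_pow (by linarith), ← ENNReal.ofReal_add (by linarith)
    (Real.exp_nonneg _)]
  exact ENNReal.ofReal_le_ofReal hmain

set_option maxHeartbeats 2000000 in
/-- Core unconditional one-shot mutual covering bound. -/
lemma aux_cover
    (ν₁ : Measure 𝓢) [IsProbabilityMeasure ν₁] (ν₂ : Measure 𝓣) [IsProbabilityMeasure ν₂]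
    (f : 𝓢 × 𝓣 → ℝ≥0∞) (hf : Measurable f)
    (hmarg1 : ∀ᵐ s ∂ν₁, ∫⁻ t, f (s, t) ∂ν₂ = 1)
    (hmarg2 : ∀ᵐ t ∂ν₂, ∫⁻ s, f (s, t) ∂ν₁ = 1)
    (G : Set (𝓢 × 𝓣)) (hG : MeasurableSet G)
    (M L : ℕ) (hM : 0 < M) (hL : 0 < L) (γ : ℝ) (hγ : 0 < γ)
    (hfG : ∀ p ∈ G, f p ≤ ENNReal.ofReal ((M : ℝ) * L * Real.exp (-(2*γ)))) :
    ((Measure.pi fun _ : Fin M => ν₁).prod (Measure.pi fun _ : Fin L => ν₂))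
        {p | ∀ m l, (p.1 m, p.2 l) ∉ G}
      ≤ ((ν₁.prod ν₂).withDensity f) Gᶜ
        + ENNReal.ofReal (((L : ℝ) - 1) / ((M : ℝ) * L * (Real.exp (-γ) - Real.exp (-(2*γ)))))
        + ENNReal.ofReal (Real.exp (-Real.exp γ)) := by
  classical
  have hMR : (0:ℝ) < M := by exact_mod_cast hM
  have hLR : (0:ℝ) < L := by exact_mod_cast hL
  have hL1R : (1:ℝ) ≤ L := by exact_mod_cast hL
  have hd : (0:ℝ) < Real.exp (-γ) - Real.exp (-(2*γ)) := by
    have h1 : -(2*γ) < -γ := by linarith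
    have := Real.exp_lt_exp.mpr h1; linarith
  set νM := Measure.pi fun _ : Fin M => ν₁ with hνM
  set νL := Measure.pi fun _ : Fin L => ν₂ with hνL
  set g : 𝓢 × 𝓣 → ℝ≥0∞ := G.indicator f with hgdef
  have hgmeas : Measurable g := hf.indicator hG
  have hgf : ∀ q, g q ≤ f q := fun q => Set.indicator_le_self _ _ q
  set C1 : ℝ≥0∞ := ENNReal.ofReal ((M:ℝ) * L * Real.exp (-γ)) with hC1
  set C2 : ℝ≥0∞ := ENNReal.ofReal ((M:ℝ) * L * Real.exp (-(2*γ))) with hC2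
  set D : ℝ≥0∞ := ENNReal.ofReal ((M:ℝ) * L * (Real.exp (-γ) - Real.exp (-(2*γ)))) with hD
  have hC2D : C2 + D = C1 := by
    rw [hC2, hD, ← ENNReal.ofReal_add (by positivity) (by positivity)]
    congr 1; ring
  have hD0 : D ≠ 0 := by
    have : (0:ℝ) < (M:ℝ) * L * (Real.exp (-γ) - Real.exp (-(2*γ))) := by positivity
    exact (ENNReal.ofReal_pos.mpr this).ne'
  have hDtop : D ≠ ∞ := ENNReal.ofReal_ne_top
  have hg_le : ∀ q, g q ≤ C2 := by
    intro q
    by_cases hq : q ∈ G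
    · rw [hgdef, Set.indicator_of_mem hq]; exact hfG q hq
    · rw [hgdef, Set.indicator_of_notMem hq]; exact zero_le
  set Phi : 𝓢 → (Fin L → 𝓣) → ℝ≥0∞ := fun s tv => ∑ l, g (s, tv l) with hPhidef
  have hPhimeas : Measurable (fun q : 𝓢 × (Fin L → 𝓣) => Phi q.1 q.2) := by
    apply Finset.measurable_sum
    intro l _
    exact hgmeas.comp (measurable_fst.prodMk ((measurable_pi_apply l).comp measurable_snd))
  set psi : 𝓢 → (Fin L → 𝓣) → ℝ≥0∞ :=
    fun s tv => if Phi s tv ≤ C1 then Phi s tv else 0 with hpsidef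
  have hpsimeas : Measurable (fun q : 𝓢 × (Fin L → 𝓣) => psi q.1 q.2) := by
    exact Measurable.ite (measurableSet_le hPhimeas measurable_const) hPhimeas measurable_const
  have hpsi_le_Phi : ∀ s tv, psi s tv ≤ Phi s tv := by
    intro s tv; rw [hpsidef]; dsimp only; split
    · exact le_rfl
    · exact zero_le
  set x : (Fin L → 𝓣) → ℝ≥0∞ := fun tv => (∫⁻ s, psi s tv ∂ν₁) / L with hxdef
  have hintpsimeas : Measurable (fun tv => ∫⁻ s, psi s tv ∂ν₁) :=
    Measurable.lintegral_prod_left' hpsimeas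
  have hxmeas : Measurable x := hintpsimeas.div measurable_const
  set H : (Fin L → 𝓣) → Set 𝓢 := fun tv => {s | ∃ l, (s, tv l) ∈ G} with hHdef
  have hHm : ∀ tv, MeasurableSet (H tv) := by
    intro tv
    have : H tv = ⋃ l, (fun s => (s, tv l)) ⁻¹' G := by
      ext s; simp [hHdef]
    rw [this]
    exact MeasurableSet.iUnion fun l => hG.preimage (measurable_id.prodMk measurable_const)
  -- Step 1 : LHS as an integral
  have hAm : MeasurableSet {p : (Fin M → 𝓢) × (Fin L → 𝓣) | ∀ m l, (p.1 m, p.2 l) ∉ G} := by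
    have : {p : (Fin M → 𝓢) × (Fin L → 𝓣) | ∀ m l, (p.1 m, p.2 l) ∉ G}
        = ⋂ m, ⋂ l, (fun p : (Fin M → 𝓢) × (Fin L → 𝓣) => (p.1 m, p.2 l)) ⁻¹' Gᶜ := by
      ext p; simp
    rw [this]
    exact MeasurableSet.iInter fun m => MeasurableSet.iInter fun l =>
      hG.compl.preimage (((measurable_pi_apply m).comp measurable_fst).prodMk
        ((measurable_pi_apply l).comp measurable_snd))
  have hstep1 : (νM.prod νL) {p | ∀ m l, (p.1 m, p.2 l) ∉ G}
      = ∫⁻ tv, (1 - ν₁ (H tv)) ^ M ∂νL := by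
    rw [Measure.prod_apply_symm hAm]
    refine lintegral_congr fun tv => ?_
    have hset : ((fun sv => (sv, tv)) ⁻¹' {p : (Fin M → 𝓢) × (Fin L → 𝓣) |
        ∀ m l, (p.1 m, p.2 l) ∉ G}) = Set.pi Set.univ (fun _ : Fin M => (H tv)ᶜ) := by
      ext sv
      simp only [Set.mem_preimage, Set.mem_setOf_eq, Set.mem_univ_pi, Set.mem_compl_iff, hHdef]
      constructor
      · intro h m ⟨l, hl⟩; exact h m l hl
      · intro h m l hml; exact h m ⟨l, hml⟩
    rw [hset, hνM, Measure.pi_pi]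
    rw [prob_compl_eq_one_sub (hHm tv)]
    simp [Finset.prod_const]
  -- Step 2 : pointwise exponent bound
  have hstep2 : ∀ tv, ENNReal.ofReal (Real.exp γ) * x tv ≤ (M : ℝ≥0∞) * ν₁ (H tv) := by
    intro tv
    have hψle : ∀ s, psi s tv ≤ (H tv).indicator (fun _ => C1) s := by
      intro s
      by_cases hs : s ∈ H tv
      · rw [Set.indicator_of_mem hs]
        rw [hpsidef]; dsimp only; split
        · assumption
        · exact zero_le
      · rw [Set.indicator_of_notMem hs]
        have hz : Phi s tv = 0 := by
          rw [hPhidef]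
          refine Finset.sum_eq_zero fun l _ => ?_
          rw [hgdef, Set.indicator_of_notMem]
          exact fun hmem => hs ⟨l, hmem⟩
        rw [hpsidef]; dsimp only; rw [hz]; simp
    have h1 : ∫⁻ s, psi s tv ∂ν₁ ≤ C1 * ν₁ (H tv) := by
      calc ∫⁻ s, psi s tv ∂ν₁ ≤ ∫⁻ s, (H tv).indicator (fun _ => C1) s ∂ν₁ :=
            lintegral_mono hψle
        _ = C1 * ν₁ (H tv) := lintegral_indicator_const (hHm tv) C1
    have hEC1 : ENNReal.ofReal (Real.exp γ) * C1 = ((M : ℝ≥0∞) * L) := by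
      rw [hC1, ← ENNReal.ofReal_mul (Real.exp_nonneg γ)]
      rw [show Real.exp γ * ((M:ℝ) * L * Real.exp (-γ))
          = (M:ℝ) * L * (Real.exp γ * Real.exp (-γ)) by ring, ← Real.exp_add]
      simp [ENNReal.ofReal_mul hMR.le, ENNReal.ofReal_natCast]
    have hLne : (L : ℝ≥0∞) ≠ 0 := by exact_mod_cast (Nat.cast_ne_zero.mpr hL.ne')
    have hLtop : (L : ℝ≥0∞) ≠ ∞ := ENNReal.natCast_ne_top L
    calc ENNReal.ofReal (Real.exp γ) * x tv
        = (ENNReal.ofReal (Real.exp γ) * ∫⁻ s, psi s tv ∂ν₁) / L := by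
          rw [hxdef]; exact mul_div_assoc .. |>.symm
      _ ≤ (ENNReal.ofReal (Real.exp γ) * (C1 * ν₁ (H tv))) / L :=
          ENNReal.div_le_div_right (mul_le_mul_right h1 _) _
      _ = ((M : ℝ≥0∞) * ν₁ (H tv) * L) / L := by
          rw [← mul_assoc, hEC1]; congr 1; ring
      _ = (M : ℝ≥0∞) * ν₁ (H tv) := by
          rw [mul_div_assoc, ENNReal.div_self hLne hLtop, mul_one]
  -- Step 3 : x ≤ 1 a.e.
  have hmargmeas : Measurable (fun t => ∫⁻ s, f (s, t) ∂ν₁) :=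
    Measurable.lintegral_prod_left' hf
  have hae3 : ∀ᵐ tv ∂νL, x tv ≤ 1 := by
    have h1 : ∀ᵐ tv ∂νL, ∀ l : Fin L, ∫⁻ s, f (s, tv l) ∂ν₁ = 1 := by
      rw [ae_all_iff]
      intro l
      exact ae_eval ν₂ l (hmargmeas (measurableSet_singleton 1)) hmarg2
    filter_upwards [h1] with tv htv
    have hb : ∫⁻ s, psi s tv ∂ν₁ ≤ (L : ℝ≥0∞) := by
      calc ∫⁻ s, psi s tv ∂ν₁ ≤ ∫⁻ s, Phi s tv ∂ν₁ := lintegral_mono fun s => hpsi_le_Phi s tv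
        _ = ∑ l : Fin L, ∫⁻ s, g (s, tv l) ∂ν₁ := by
            rw [hPhidef]
            exact lintegral_finset_sum _ fun l _ =>
              hgmeas.comp (measurable_id.prodMk measurable_const)
        _ ≤ ∑ l : Fin L, ∫⁻ s, f (s, tv l) ∂ν₁ :=
            Finset.sum_le_sum fun l _ => lintegral_mono fun s => hgf _
        _ = (L : ℝ≥0∞) := by simp [htv]
    rw [hxdef]
    exact ENNReal.div_le_of_le_mul (by simpa using hb)
  -- the section integral of g
  set phi : 𝓢 → ℝ≥0∞ := fun s => ∫⁻ t, g (s, t) ∂ν₂ with hphidef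
  have hphimeas : Measurable phi := Measurable.lintegral_prod_right' hgmeas
  have hphi1 : ∀ᵐ s ∂ν₁, phi s ≤ 1 := by
    filter_upwards [hmarg1] with s hs
    rw [hphidef, ← hs]
    exact lintegral_mono fun t => hgf _
  set p : ℝ≥0∞ := ((ν₁.prod ν₂).withDensity f) G with hpdef
  have hp_eq : p = ∫⁻ s, phi s ∂ν₁ := by
    rw [hpdef, withDensity_apply f hG, ← lintegral_indicator hG,
      lintegral_prod _ hgmeas.aemeasurable]
  have hp1 : p ≤ 1 := by
    rw [hp_eq]
    calc ∫⁻ s, phi s ∂ν₁ ≤ ∫⁻ _, 1 ∂ν₁ := lintegral_mono_ae hphi1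
      _ = 1 := by simp
  -- Step 4 : p ≤ ∫ x + loss
  set loss : ℝ≥0∞ := ENNReal.ofReal (((L:ℝ) - 1) /
      ((M:ℝ) * L * (Real.exp (-γ) - Real.exp (-(2*γ))))) with hlossdef
  have hloss_eq : loss = ENNReal.ofReal ((L:ℝ) - 1) / D := by
    rw [hlossdef, hD, ENNReal.ofReal_div_of_pos (by positivity)]
  have hLne : (L : ℝ≥0∞) ≠ 0 := by exact_mod_cast (Nat.cast_ne_zero.mpr hL.ne')
  have hLtop : (L : ℝ≥0∞) ≠ ∞ := ENNReal.natCast_ne_top L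
  set pair : 𝓢 → (Fin L → 𝓣) → ℝ≥0∞ :=
    fun s tv => ∑ l, ∑ l' ∈ Finset.univ.erase l, g (s, tv l) * g (s, tv l') with hpairdef
  have hpairmeas : Measurable (fun q : 𝓢 × (Fin L → 𝓣) => pair q.1 q.2) := by
    apply Finset.measurable_sum; intro l _
    apply Finset.measurable_sum; intro l' _
    exact (hgmeas.comp (measurable_fst.prodMk ((measurable_pi_apply l).comp
      measurable_snd))).mul (hgmeas.comp (measurable_fst.prodMk
        ((measurable_pi_apply l').comp measurable_snd)))
  have hkey4 : ∀ s tv, Phi s tv ≤ psi s tv + pair s tv / D := by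
    intro s tv
    by_cases hc : Phi s tv ≤ C1
    · have hps : psi s tv = Phi s tv := by rw [hpsidef]; simp [hc]
      rw [hps]; exact le_self_add
    · have hPhiC1 : C1 ≤ Phi s tv := (not_le.mp hc).le
      have hR : ∀ l : Fin L, D ≤ ∑ l' ∈ Finset.univ.erase l, g (s, tv l') := by
        intro l
        have hsplit : Phi s tv = g (s, tv l) + ∑ l' ∈ Finset.univ.erase l, g (s, tv l') :=
          (Finset.add_sum_erase _ _ (Finset.mem_univ l)).symm
        have h2 : C2 + D ≤ C2 + ∑ l' ∈ Finset.univ.erase l, g (s, tv l') := by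
          calc C2 + D = C1 := hC2D
            _ ≤ Phi s tv := hPhiC1
            _ = g (s, tv l) + ∑ l' ∈ Finset.univ.erase l, g (s, tv l') := hsplit
            _ ≤ C2 + ∑ l' ∈ Finset.univ.erase l, g (s, tv l') :=
                add_le_add_left (hg_le _) _
        exact (ENNReal.add_le_add_iff_left ENNReal.ofReal_ne_top).mp h2
      have hterm : ∀ l : Fin L, g (s, tv l)
          ≤ g (s, tv l) * (∑ l' ∈ Finset.univ.erase l, g (s, tv l')) / D := by
        intro l
        have h1 : (1:ℝ≥0∞) ≤ (∑ l' ∈ Finset.univ.erase l, g (s, tv l')) / D :=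
          (ENNReal.le_div_iff_mul_le (Or.inl hD0) (Or.inl hDtop)).mpr (by simpa using hR l)
        calc g (s, tv l) = g (s, tv l) * 1 := (mul_one _).symm
          _ ≤ g (s, tv l) * ((∑ l' ∈ Finset.univ.erase l, g (s, tv l')) / D) :=
              mul_le_mul_right h1 _
          _ = g (s, tv l) * (∑ l' ∈ Finset.univ.erase l, g (s, tv l')) / D :=
              (mul_div_assoc ..).symm
      have hfin : Phi s tv ≤ pair s tv / D := by
        calc Phi s tv = ∑ l, g (s, tv l) := rfl
          _ ≤ ∑ l, g (s, tv l) * (∑ l' ∈ Finset.univ.erase l, g (s, tv l')) / D :=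
              Finset.sum_le_sum fun l _ => hterm l
          _ = pair s tv / D := by
              simp only [hpairdef, div_eq_mul_inv, Finset.sum_mul]
              exact Finset.sum_congr rfl fun l _ => by rw [Finset.mul_sum, Finset.sum_mul]
      exact le_trans hfin le_add_self
  have hJ : ∫⁻ tv, ∫⁻ s, Phi s tv ∂ν₁ ∂νL = (L : ℝ≥0∞) * p := by
    have hBmeas : Measurable (fun t => ∫⁻ s, g (s, t) ∂ν₁) :=
      Measurable.lintegral_prod_left' hgmeas
    have h1 : ∀ tv, ∫⁻ s, Phi s tv ∂ν₁ = ∑ l : Fin L, ∫⁻ s, g (s, tv l) ∂ν₁ := by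
      intro tv
      exact lintegral_finset_sum _ fun l _ =>
        hgmeas.comp (measurable_id.prodMk measurable_const)
    simp_rw [h1]
    rw [lintegral_finset_sum (μ := νL)
      (f := fun (l : Fin L) (tv : Fin L → 𝓣) => ∫⁻ s, g (s, tv l) ∂ν₁) Finset.univ
      (fun l _ => (hBmeas.comp (measurable_pi_apply l) :
        Measurable fun tv : Fin L → 𝓣 => ∫⁻ s, g (s, tv l) ∂ν₁))]
    have hp_eq2 : p = ∫⁻ t, ∫⁻ s, g (s, t) ∂ν₁ ∂ν₂ := by
      rw [hpdef, withDensity_apply f hG, ← lintegral_indicator hG,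
        lintegral_prod_symm _ hgmeas.aemeasurable]
    have h2 : ∀ l : Fin L, ∫⁻ tv, (∫⁻ s, g (s, tv l) ∂ν₁) ∂νL = p := by
      intro l
      rw [hνL, lintegral_eval ν₂ l hBmeas, ← hp_eq2]
    simp only [h2, Finset.sum_const, Finset.card_univ, Fintype.card_fin, nsmul_eq_mul]
  have hpair_int : ∫⁻ tv, ∫⁻ s, pair s tv ∂ν₁ ∂νL
      ≤ (L : ℝ≥0∞) * ENNReal.ofReal ((L:ℝ) - 1) := by
    have hterm : ∀ l l' : Fin L, l' ≠ l →
        ∫⁻ tv, ∫⁻ s, g (s, tv l) * g (s, tv l') ∂ν₁ ∂νL ≤ 1 := by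
      intro l l' hll'
      have hum : Measurable (Function.uncurry
          (fun (tv : Fin L → 𝓣) (s : 𝓢) => g (s, tv l) * g (s, tv l'))) := by
        apply Measurable.mul
        · exact hgmeas.comp (measurable_snd.prodMk
            ((measurable_pi_apply l).comp measurable_fst))
        · exact hgmeas.comp (measurable_snd.prodMk
            ((measurable_pi_apply l').comp measurable_fst))
      rw [lintegral_lintegral_swap hum.aemeasurable]
      have hsec : ∀ s : 𝓢, ∫⁻ tv, g (s, tv l) * g (s, tv l') ∂νL = phi s * phi s := by
        intro s
        rw [hνL, lintegral_eval_mul_eval ν₂ (Ne.symm hll')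
          (f := fun t : 𝓣 => g (s, t)) (g := fun t : 𝓣 => g (s, t))
          ((hgmeas.comp (measurable_const.prodMk measurable_id)) :
            Measurable fun t : 𝓣 => g (s, t))
          ((hgmeas.comp (measurable_const.prodMk measurable_id)) :
            Measurable fun t : 𝓣 => g (s, t))]
      simp_rw [hsec]
      calc ∫⁻ s, phi s * phi s ∂ν₁ ≤ ∫⁻ s, phi s ∂ν₁ := by
            refine lintegral_mono_ae ?_
            filter_upwards [hphi1] with s hs
            calc phi s * phi s ≤ phi s * 1 := mul_le_mul_right hs _
              _ = phi s := mul_one _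
        _ = p := hp_eq.symm
        _ ≤ 1 := hp1
    have hexch : ∫⁻ tv, ∫⁻ s, pair s tv ∂ν₁ ∂νL
        = ∑ l : Fin L, ∑ l' ∈ Finset.univ.erase l,
            ∫⁻ tv, ∫⁻ s, g (s, tv l) * g (s, tv l') ∂ν₁ ∂νL := by
      have hinner : ∀ tv, ∫⁻ s, pair s tv ∂ν₁
          = ∑ l : Fin L, ∑ l' ∈ Finset.univ.erase l,
              ∫⁻ s, g (s, tv l) * g (s, tv l') ∂ν₁ := by
        intro tv
        simp only [hpairdef]
        rw [lintegral_finset_sum (μ := ν₁)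
          (f := fun (l : Fin L) (s : 𝓢) => ∑ l' ∈ Finset.univ.erase l,
            g (s, tv l) * g (s, tv l')) Finset.univ
          (fun l _ => Finset.measurable_sum _ fun l' _ =>
            (((hgmeas.comp (measurable_id.prodMk measurable_const)).mul
              (hgmeas.comp (measurable_id.prodMk measurable_const))) :
                Measurable fun s : 𝓢 => g (s, tv l) * g (s, tv l')))]
        exact Finset.sum_congr rfl fun l _ =>
          lintegral_finset_sum (μ := ν₁)
            (f := fun (l' : Fin L) (s : 𝓢) => g (s, tv l) * g (s, tv l')) _
            (fun l' _ =>
              (((hgmeas.comp (measurable_id.prodMk measurable_const)).mul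
                (hgmeas.comp (measurable_id.prodMk measurable_const))) :
                  Measurable fun s : 𝓢 => g (s, tv l) * g (s, tv l')))
      simp_rw [hinner]
      have hglm : ∀ l l' : Fin L, Measurable
          (fun q : 𝓢 × (Fin L → 𝓣) => g (q.1, q.2 l) * g (q.1, q.2 l')) := fun l l' =>
        ((hgmeas.comp (measurable_fst.prodMk
          ((measurable_pi_apply l).comp measurable_snd))).mul
          (hgmeas.comp (measurable_fst.prodMk
            ((measurable_pi_apply l').comp measurable_snd))))
      rw [lintegral_finset_sum (μ := νL)
        (f := fun (l : Fin L) (tv : Fin L → 𝓣) => ∑ l' ∈ Finset.univ.erase l,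
          ∫⁻ s, g (s, tv l) * g (s, tv l') ∂ν₁) Finset.univ
        (fun l _ => Finset.measurable_sum _ fun l' _ =>
          (Measurable.lintegral_prod_left' (hglm l l') :
            Measurable fun tv : Fin L → 𝓣 => ∫⁻ s, g (s, tv l) * g (s, tv l') ∂ν₁))]
      exact Finset.sum_congr rfl fun l _ =>
        lintegral_finset_sum (μ := νL)
          (f := fun (l' : Fin L) (tv : Fin L → 𝓣) =>
            ∫⁻ s, g (s, tv l) * g (s, tv l') ∂ν₁) _
          (fun l' _ => (Measurable.lintegral_prod_left' (hglm l l') :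
            Measurable fun tv : Fin L → 𝓣 => ∫⁻ s, g (s, tv l) * g (s, tv l') ∂ν₁))
    rw [hexch]
    have hcast : ((L - 1 : ℕ) : ℝ≥0∞) = ENNReal.ofReal ((L:ℝ) - 1) := by
      rw [← ENNReal.ofReal_natCast]
      congr 1
      push_cast [Nat.cast_sub hL]
      ring
    calc ∑ l : Fin L, ∑ l' ∈ Finset.univ.erase l,
          ∫⁻ tv, ∫⁻ s, g (s, tv l) * g (s, tv l') ∂ν₁ ∂νL
        ≤ ∑ l : Fin L, ∑ _l' ∈ Finset.univ.erase l, (1:ℝ≥0∞) :=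
          Finset.sum_le_sum fun l _ => Finset.sum_le_sum fun l' hl' =>
            hterm l l' (Finset.ne_of_mem_erase hl')
      _ = (L : ℝ≥0∞) * ((L - 1 : ℕ) : ℝ≥0∞) := by
          simp [Finset.card_erase_of_mem, mul_comm]
      _ = (L : ℝ≥0∞) * ENNReal.ofReal ((L:ℝ) - 1) := by rw [hcast]
  have hxint : ∫⁻ tv, x tv ∂νL = (∫⁻ tv, ∫⁻ s, psi s tv ∂ν₁ ∂νL) / L := by
    rw [hxdef]
    simp_rw [div_eq_mul_inv]
    rw [lintegral_mul_const (μ := νL) (L : ℝ≥0∞)⁻¹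
      (f := fun tv => ∫⁻ s, psi s tv ∂ν₁) hintpsimeas]
  have hstep4 : p ≤ (∫⁻ tv, x tv ∂νL) + loss := by
    have hptwise : ∀ tv, ∫⁻ s, Phi s tv ∂ν₁
        ≤ (∫⁻ s, psi s tv ∂ν₁) + (∫⁻ s, pair s tv ∂ν₁) / D := by
      intro tv
      calc ∫⁻ s, Phi s tv ∂ν₁ ≤ ∫⁻ s, (psi s tv + pair s tv / D) ∂ν₁ :=
            lintegral_mono fun s => hkey4 s tv
        _ = (∫⁻ s, psi s tv ∂ν₁) + ∫⁻ s, pair s tv / D ∂ν₁ :=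
            lintegral_add_left (hpsimeas.comp (measurable_id.prodMk measurable_const)) _
        _ = (∫⁻ s, psi s tv ∂ν₁) + (∫⁻ s, pair s tv ∂ν₁) / D := by
            congr 1
            simp_rw [div_eq_mul_inv]
            rw [lintegral_mul_const (μ := ν₁) D⁻¹ (f := fun s => pair s tv)
              ((hpairmeas.comp (measurable_id.prodMk measurable_const)) :
                Measurable fun s : 𝓢 => pair s tv)]
    have hpairdivmeas : Measurable fun tv => (∫⁻ s, pair s tv ∂ν₁) / D := by
      exact (Measurable.lintegral_prod_left' hpairmeas).div measurable_const
    have hmono : (L:ℝ≥0∞) * p ≤ (∫⁻ tv, ∫⁻ s, psi s tv ∂ν₁ ∂νL) + (L:ℝ≥0∞) * loss := by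
      calc (L:ℝ≥0∞) * p = ∫⁻ tv, ∫⁻ s, Phi s tv ∂ν₁ ∂νL := hJ.symm
        _ ≤ ∫⁻ tv, ((∫⁻ s, psi s tv ∂ν₁) + (∫⁻ s, pair s tv ∂ν₁) / D) ∂νL :=
            lintegral_mono hptwise
        _ = (∫⁻ tv, ∫⁻ s, psi s tv ∂ν₁ ∂νL) + ∫⁻ tv, (∫⁻ s, pair s tv ∂ν₁) / D ∂νL :=
            lintegral_add_left hintpsimeas _
        _ ≤ (∫⁻ tv, ∫⁻ s, psi s tv ∂ν₁ ∂νL) + (L:ℝ≥0∞) * loss := by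
            refine add_le_add_right ?_ _
            have : ∫⁻ tv, (∫⁻ s, pair s tv ∂ν₁) / D ∂νL
                = (∫⁻ tv, ∫⁻ s, pair s tv ∂ν₁ ∂νL) / D := by
              simp_rw [div_eq_mul_inv]
              rw [lintegral_mul_const (μ := νL) D⁻¹
                (f := fun tv => ∫⁻ s, pair s tv ∂ν₁)
                ((Measurable.lintegral_prod_left' hpairmeas) :
                  Measurable fun tv : Fin L → 𝓣 => ∫⁻ s, pair s tv ∂ν₁)]
            rw [this, hloss_eq, ← mul_div_assoc]
            exact ENNReal.div_le_div_right hpair_int D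
    have hdivided := ENNReal.div_le_div_right hmono (L : ℝ≥0∞)
    have hcancel : ∀ a : ℝ≥0∞, ((L:ℝ≥0∞) * a) / L = a := by
      intro a
      rw [mul_comm, mul_div_assoc, ENNReal.div_self hLne hLtop, mul_one]
    rw [hcancel, ENNReal.add_div, hcancel] at hdivided
    rw [hxint]
    exact hdivided
  -- Step 5 : assemble
  set eterm : ℝ≥0∞ := ENNReal.ofReal (Real.exp (-Real.exp γ)) with hetermdef
  have hxle1 : ∫⁻ tv, x tv ∂νL ≤ 1 := by
    calc ∫⁻ tv, x tv ∂νL ≤ ∫⁻ _, 1 ∂νL := lintegral_mono_ae hae3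
      _ = 1 := by simp
  have hstep5 : ∫⁻ tv, (1 - ν₁ (H tv)) ^ M ∂νL ≤ (1 - ∫⁻ tv, x tv ∂νL) + eterm := by
    have hptw : ∀ᵐ tv ∂νL, (1 - ν₁ (H tv)) ^ M ≤ (1 - x tv) + eterm := by
      filter_upwards [hae3] with tv hx1
      exact ennreal_key prob_le_one hx1 M (hstep2 tv)
    calc ∫⁻ tv, (1 - ν₁ (H tv)) ^ M ∂νL ≤ ∫⁻ tv, ((1 - x tv) + eterm) ∂νL :=
          lintegral_mono_ae hptw
      _ = (∫⁻ tv, (1 - x tv) ∂νL) + eterm := by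
          rw [lintegral_add_right _ measurable_const]; simp
      _ = (1 - ∫⁻ tv, x tv ∂νL) + eterm := by
          congr 1
          rw [show (fun tv => 1 - x tv) = fun tv => (fun _ => (1:ℝ≥0∞)) tv - x tv from rfl]
          rw [lintegral_sub hxmeas (lt_of_le_of_lt hxle1 ENNReal.one_lt_top).ne hae3]
          simp
  have huniv : p + ((ν₁.prod ν₂).withDensity f) Gᶜ = 1 := by
    rw [hpdef, measure_add_measure_compl hG]
    have : ∫⁻ q, f q ∂(ν₁.prod ν₂) = 1 := by
      rw [lintegral_prod _ hf.aemeasurable]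
      calc ∫⁻ s, ∫⁻ t, f (s, t) ∂ν₂ ∂ν₁ = ∫⁻ _, 1 ∂ν₁ := lintegral_congr_ae hmarg1
        _ = 1 := by simp
    rw [← this, ← setLIntegral_univ f, ← withDensity_apply f MeasurableSet.univ]
  have h1sub : (1 : ℝ≥0∞) - (∫⁻ tv, x tv ∂νL)
      ≤ ((ν₁.prod ν₂).withDensity f) Gᶜ + loss := by
    rw [tsub_le_iff_right]
    calc (1:ℝ≥0∞) = p + ((ν₁.prod ν₂).withDensity f) Gᶜ := huniv.symm
      _ ≤ ((∫⁻ tv, x tv ∂νL) + loss) + ((ν₁.prod ν₂).withDensity f) Gᶜ :=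
          add_le_add_left hstep4 _
      _ = (((ν₁.prod ν₂).withDensity f) Gᶜ + loss) + ∫⁻ tv, x tv ∂νL := by ring
  calc ((Measure.pi fun _ : Fin M => ν₁).prod (Measure.pi fun _ : Fin L => ν₂))
        {p | ∀ m l, (p.1 m, p.2 l) ∉ G}
      = ∫⁻ tv, (1 - ν₁ (H tv)) ^ M ∂νL := hstep1
    _ ≤ (1 - ∫⁻ tv, x tv ∂νL) + eterm := hstep5
    _ ≤ (((ν₁.prod ν₂).withDensity f) Gᶜ + loss) + eterm := add_le_add_left h1sub _

set_option maxHeartbeats 2000000 in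
/-- Symmetrized version of `aux_cover`, with `min M L` in the residual term. -/
lemma aux_cover_min
    (ν₁ : Measure 𝓢) [IsProbabilityMeasure ν₁] (ν₂ : Measure 𝓣) [IsProbabilityMeasure ν₂]
    (f : 𝓢 × 𝓣 → ℝ≥0∞) (hf : Measurable f)
    (hmarg1 : ∀ᵐ s ∂ν₁, ∫⁻ t, f (s, t) ∂ν₂ = 1)
    (hmarg2 : ∀ᵐ t ∂ν₂, ∫⁻ s, f (s, t) ∂ν₁ = 1)
    (G : Set (𝓢 × 𝓣)) (hG : MeasurableSet G)
    (M L : ℕ) (hM : 0 < M) (hL : 0 < L) (γ : ℝ) (hγ : 0 < γ)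
    (hfG : ∀ p ∈ G, f p ≤ ENNReal.ofReal ((M : ℝ) * L * Real.exp (-(2*γ)))) :
    ((Measure.pi fun _ : Fin M => ν₁).prod (Measure.pi fun _ : Fin L => ν₂))
        {p | ∀ m l, (p.1 m, p.2 l) ∉ G}
      ≤ ((ν₁.prod ν₂).withDensity f) Gᶜ
        + ENNReal.ofReal ((min (M:ℝ) (L:ℝ) - 1)
            / ((M : ℝ) * L * (Real.exp (-γ) - Real.exp (-(2*γ)))))
        + ENNReal.ofReal (Real.exp (-Real.exp γ)) := by
  rcases le_total (L:ℝ) (M:ℝ) with hLM | hML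
  · rw [min_eq_right hLM]
    exact aux_cover ν₁ ν₂ f hf hmarg1 hmarg2 G hG M L hM hL γ hγ hfG
  · rw [min_eq_left hML]
    have hAm : MeasurableSet {p : (Fin M → 𝓢) × (Fin L → 𝓣) | ∀ m l, (p.1 m, p.2 l) ∉ G} := by
      have : {p : (Fin M → 𝓢) × (Fin L → 𝓣) | ∀ m l, (p.1 m, p.2 l) ∉ G}
          = ⋂ m, ⋂ l, (fun p : (Fin M → 𝓢) × (Fin L → 𝓣) => (p.1 m, p.2 l)) ⁻¹' Gᶜ := by
        ext p; simp
      rw [this]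
      exact MeasurableSet.iInter fun m => MeasurableSet.iInter fun l =>
        hG.compl.preimage (((measurable_pi_apply m).comp measurable_fst).prodMk
          ((measurable_pi_apply l).comp measurable_snd))
    have hswap := aux_cover ν₂ ν₁ (fun q : 𝓣 × 𝓢 => f (q.2, q.1))
      (hf.comp measurable_swap) hmarg2 hmarg1 (Prod.swap ⁻¹' G)
      (hG.preimage measurable_swap) L M hL hM γ hγ
      (fun q hq => by
        have := hfG (q.2, q.1) hq
        calc f (q.2, q.1) ≤ ENNReal.ofReal ((M : ℝ) * L * Real.exp (-(2*γ))) := this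
          _ = ENNReal.ofReal ((L : ℝ) * M * Real.exp (-(2*γ))) := by rw [mul_comm (M:ℝ) (L:ℝ)])
    have hLHSeq : ((Measure.pi fun _ : Fin M => ν₁).prod (Measure.pi fun _ : Fin L => ν₂))
        {p | ∀ m l, (p.1 m, p.2 l) ∉ G}
        = ((Measure.pi fun _ : Fin L => ν₂).prod (Measure.pi fun _ : Fin M => ν₁))
          {p : (Fin L → 𝓣) × (Fin M → 𝓢) | ∀ l m, (p.1 l, p.2 m) ∉ Prod.swap ⁻¹' G} := by
      rw [← Measure.prod_swap, Measure.map_apply measurable_swap hAm]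
      congr 1
      ext p
      simp only [Set.mem_preimage, Set.mem_setOf_eq, Prod.fst_swap, Prod.snd_swap]
      exact ⟨fun h l m => h m l, fun h m l => h l m⟩
    have hwdeq : ((ν₂.prod ν₁).withDensity (fun q : 𝓣 × 𝓢 => f (q.2, q.1)))
        (Prod.swap ⁻¹' G)ᶜ = ((ν₁.prod ν₂).withDensity f) Gᶜ := by
      rw [withDensity_apply _ ((hG.preimage measurable_swap).compl),
        withDensity_apply _ hG.compl,
        ← lintegral_indicator ((hG.preimage measurable_swap).compl),
        ← lintegral_indicator hG.compl]
      have hptw : ((Prod.swap ⁻¹' G)ᶜ).indicator (fun q : 𝓣 × 𝓢 => f (q.2, q.1))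
          = fun q : 𝓣 × 𝓢 => (Gᶜ.indicator f) q.swap := by
        funext q
        by_cases hq : q.swap ∈ G
        · rw [Set.indicator_of_notMem (by simpa using hq), Set.indicator_of_notMem (by simpa using hq)]
        · rw [Set.indicator_of_mem (by simpa using hq), Set.indicator_of_mem (by simpa using hq)]
          rfl
      rw [hptw]
      exact lintegral_prod_swap _
    rw [hLHSeq, ← hwdeq]
    have hcomm : (L:ℝ) * M * (Real.exp (-γ) - Real.exp (-(2*γ)))
        = (M:ℝ) * L * (Real.exp (-γ) - Real.exp (-(2*γ))) := by ring
    rw [← hcomm]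
    exact hswap

set_option maxHeartbeats 2000000 in
lemma marg_one
    {𝓤 𝓢 𝓣 : Type*} [MeasurableSpace 𝓤] [MeasurableSpace 𝓢] [MeasurableSpace 𝓣]
    (μUST : Measure (𝓤 × 𝓢 × 𝓣)) [IsProbabilityMeasure μUST]
    (μU : Measure 𝓤) [IsProbabilityMeasure μU]
    (κS : Kernel 𝓤 𝓢) [IsMarkovKernel κS]
    (κT : Kernel 𝓤 𝓣) [IsMarkovKernel κT]
    (κST : Kernel 𝓤 (𝓢 × 𝓣)) [IsMarkovKernel κST]
    (hS : μUST.map (fun p => (p.1, p.2.1)) = μU ⊗ₘ κS)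
    (hST : μUST = μU ⊗ₘ κST)
    (f : 𝓤 × 𝓢 × 𝓣 → ℝ≥0∞) (hf : Measurable f)
    (hdens : ∀ᵐ u ∂μU, κST u
      = ((κS u).prod (κT u)).withDensity (fun st => f (u, st.1, st.2))) :
    ∀ᵐ u ∂μU, ∀ᵐ s ∂κS u, ∫⁻ t, f (u, s, t) ∂κT u = 1 := by
  have hfinSM : IsFiniteMeasure (μU ⊗ₘ κS) := by
    constructor
    rw [Measure.compProd_apply_univ]
    simp
  have hgSmeas : Measurable (fun q : 𝓤 × 𝓢 => ∫⁻ t, f (q.1, q.2, t) ∂κT q.1) := by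
    have h := Measurable.lintegral_kernel_prod_right'
      (κ := κT.comap (Prod.fst : 𝓤 × 𝓢 → 𝓤) measurable_fst)
      (f := fun r : (𝓤 × 𝓢) × 𝓣 => f (r.1.1, r.1.2, r.2))
      (hf.comp ((measurable_fst.comp measurable_fst).prodMk
        ((measurable_snd.comp measurable_fst).prodMk measurable_snd)))
    simpa [Kernel.comap_apply] using h
  set gS : 𝓤 × 𝓢 → ℝ≥0∞ := fun q => ∫⁻ t, f (q.1, q.2, t) ∂κT q.1 with hgSdef
  have hwd : ∀ C : Set (𝓤 × 𝓢), MeasurableSet C →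
      ∫⁻ q in C, gS q ∂(μU ⊗ₘ κS) = (μU ⊗ₘ κS) C := by
    intro C hC
    have hLHS : ∫⁻ q in C, gS q ∂(μU ⊗ₘ κS)
        = ∫⁻ u, ∫⁻ s, C.indicator gS (u, s) ∂κS u ∂μU := by
      rw [← lintegral_indicator hC, Measure.lintegral_compProd (hgSmeas.indicator hC)]
    have hprojm : Measurable (fun p : 𝓤 × 𝓢 × 𝓣 => (p.1, p.2.1)) := by fun_prop
    have hRHS : (μU ⊗ₘ κS) C = ∫⁻ u, κST u {st : 𝓢 × 𝓣 | (u, st.1) ∈ C} ∂μU := by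
      rw [← hS, Measure.map_apply hprojm hC, hST,
        Measure.compProd_apply (hC.preimage hprojm)]
      rfl
    rw [hLHS, hRHS]
    refine lintegral_congr_ae ?_
    filter_upwards [hdens] with u hu
    have hDum : MeasurableSet {st : 𝓢 × 𝓣 | (u, st.1) ∈ C} :=
      hC.preimage (measurable_const.prodMk measurable_fst)
    have hfu : Measurable (fun st : 𝓢 × 𝓣 => f (u, st.1, st.2)) :=
      hf.comp (measurable_const.prodMk measurable_id)
    rw [hu, withDensity_apply _ hDum, ← lintegral_indicator hDum,
      lintegral_prod ({st : 𝓢 × 𝓣 | (u, st.1) ∈ C}.indicator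
        (fun st : 𝓢 × 𝓣 => f (u, st.1, st.2))) (hfu.indicator hDum).aemeasurable]
    refine lintegral_congr fun s => ?_
    by_cases hsC : (u, s) ∈ C
    · rw [Set.indicator_of_mem hsC]
      refine lintegral_congr fun t => ?_
      exact (Set.indicator_of_mem (show (s, t) ∈ {st : 𝓢 × 𝓣 | (u, st.1) ∈ C} from hsC)
        (fun st : 𝓢 × 𝓣 => f (u, st.1, st.2))).symm
    · rw [Set.indicator_of_notMem hsC]
      symm
      have hz : ∀ t : 𝓣, ({st : 𝓢 × 𝓣 | (u, st.1) ∈ C}).indicator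
          (fun st : 𝓢 × 𝓣 => f (u, st.1, st.2)) (s, t) = 0 := fun t =>
        Set.indicator_of_notMem (show (s, t) ∉ {st : 𝓢 × 𝓣 | (u, st.1) ∈ C} from hsC)
          (fun st : 𝓢 × 𝓣 => f (u, st.1, st.2))
      simp [hz]
  have hone : gS =ᵐ[μU ⊗ₘ κS] (fun _ => 1) := by
    refine ae_eq_of_forall_setLIntegral_eq_of_sigmaFinite hgSmeas measurable_one ?_
    intro s hs _
    rw [hwd s hs, setLIntegral_one]
  have h2 := Measure.ae_ae_of_ae_compProd (μ := μU) (κ := κS) hone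
  filter_upwards [h2] with u hu
  filter_upwards [hu] with s hs
  exact hs

set_option maxHeartbeats 2000000 in
lemma marg_one'
    {𝓤 𝓢 𝓣 : Type*} [MeasurableSpace 𝓤] [MeasurableSpace 𝓢] [MeasurableSpace 𝓣]
    (μUST : Measure (𝓤 × 𝓢 × 𝓣)) [IsProbabilityMeasure μUST]
    (μU : Measure 𝓤) [IsProbabilityMeasure μU]
    (κS : Kernel 𝓤 𝓢) [IsMarkovKernel κS]
    (κT : Kernel 𝓤 𝓣) [IsMarkovKernel κT]
    (κST : Kernel 𝓤 (𝓢 × 𝓣)) [IsMarkovKernel κST]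
    (hT : μUST.map (fun p => (p.1, p.2.2)) = μU ⊗ₘ κT)
    (hST : μUST = μU ⊗ₘ κST)
    (f : 𝓤 × 𝓢 × 𝓣 → ℝ≥0∞) (hf : Measurable f)
    (hdens : ∀ᵐ u ∂μU, κST u
      = ((κS u).prod (κT u)).withDensity (fun st => f (u, st.1, st.2))) :
    ∀ᵐ u ∂μU, ∀ᵐ t ∂κT u, ∫⁻ s, f (u, s, t) ∂κS u = 1 := by
  have hfinTM : IsFiniteMeasure (μU ⊗ₘ κT) := by
    constructor
    rw [Measure.compProd_apply_univ]
    simp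
  have hgTmeas : Measurable (fun q : 𝓤 × 𝓣 => ∫⁻ s, f (q.1, s, q.2) ∂κS q.1) := by
    have h := Measurable.lintegral_kernel_prod_right'
      (κ := κS.comap (Prod.fst : 𝓤 × 𝓣 → 𝓤) measurable_fst)
      (f := fun r : (𝓤 × 𝓣) × 𝓢 => f (r.1.1, r.2, r.1.2))
      (hf.comp ((measurable_fst.comp measurable_fst).prodMk
        (measurable_snd.prodMk (measurable_snd.comp measurable_fst))))
    simpa [Kernel.comap_apply] using h
  set gT : 𝓤 × 𝓣 → ℝ≥0∞ := fun q => ∫⁻ s, f (q.1, s, q.2) ∂κS q.1 with hgTdef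
  have hwd : ∀ C : Set (𝓤 × 𝓣), MeasurableSet C →
      ∫⁻ q in C, gT q ∂(μU ⊗ₘ κT) = (μU ⊗ₘ κT) C := by
    intro C hC
    have hLHS : ∫⁻ q in C, gT q ∂(μU ⊗ₘ κT)
        = ∫⁻ u, ∫⁻ t, C.indicator gT (u, t) ∂κT u ∂μU := by
      rw [← lintegral_indicator hC, Measure.lintegral_compProd (hgTmeas.indicator hC)]
    have hprojm : Measurable (fun p : 𝓤 × 𝓢 × 𝓣 => (p.1, p.2.2)) := by fun_prop
    have hRHS : (μU ⊗ₘ κT) C = ∫⁻ u, κST u {st : 𝓢 × 𝓣 | (u, st.2) ∈ C} ∂μU := by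
      rw [← hT, Measure.map_apply hprojm hC, hST,
        Measure.compProd_apply (hC.preimage hprojm)]
      rfl
    rw [hLHS, hRHS]
    refine lintegral_congr_ae ?_
    filter_upwards [hdens] with u hu
    have hDum : MeasurableSet {st : 𝓢 × 𝓣 | (u, st.2) ∈ C} :=
      hC.preimage (measurable_const.prodMk measurable_snd)
    have hfu : Measurable (fun st : 𝓢 × 𝓣 => f (u, st.1, st.2)) :=
      hf.comp (measurable_const.prodMk measurable_id)
    rw [hu, withDensity_apply _ hDum, ← lintegral_indicator hDum,
      lintegral_prod_symm ({st : 𝓢 × 𝓣 | (u, st.2) ∈ C}.indicator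
        (fun st : 𝓢 × 𝓣 => f (u, st.1, st.2))) (hfu.indicator hDum).aemeasurable]
    refine lintegral_congr fun t => ?_
    by_cases htC : (u, t) ∈ C
    · rw [Set.indicator_of_mem htC]
      refine lintegral_congr fun s => ?_
      exact (Set.indicator_of_mem (show (s, t) ∈ {st : 𝓢 × 𝓣 | (u, st.2) ∈ C} from htC)
        (fun st : 𝓢 × 𝓣 => f (u, st.1, st.2))).symm
    · rw [Set.indicator_of_notMem htC]
      symm
      have hz : ∀ s : 𝓢, ({st : 𝓢 × 𝓣 | (u, st.2) ∈ C}).indicator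
          (fun st : 𝓢 × 𝓣 => f (u, st.1, st.2)) (s, t) = 0 := fun s =>
        Set.indicator_of_notMem (show (s, t) ∉ {st : 𝓢 × 𝓣 | (u, st.2) ∈ C} from htC)
          (fun st : 𝓢 × 𝓣 => f (u, st.1, st.2))
      simp [hz]
  have hone : gT =ᵐ[μU ⊗ₘ κT] (fun _ => 1) := by
    refine ae_eq_of_forall_setLIntegral_eq_of_sigmaFinite hgTmeas measurable_one ?_
    intro s hs _
    rw [hwd s hs, setLIntegral_one]
  have h2 := Measure.ae_ae_of_ae_compProd (μ := μU) (κ := κT) hone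
  filter_upwards [h2] with u hu
  filter_upwards [hu] with t ht
  exact ht

end OSC

open OSC in
set_option maxHeartbeats 2000000 in
/-- Conditional one-shot mutual covering lemma (Lemma 5). Given `U`, the `Sₘ` are
i.i.d. `P_{S|U}` and the `Tₗ` are i.i.d. `P_{T|U}`, conditionally independent given `U`;
`ı_{S;T|U}(s;t|u)` is the conditional information density, i.e. `exp ∘ iST u` is the
density of `P_{ST|U=u}` w.r.t. `P_{S|U=u} × P_{T|U=u}`. Then
`P[∩∩ {(U,Sₘ,Tₗ) ∉ F}] ≤ P[{(U,S,T) ∉ F} ∪ {ı > log(ML) - 2γ}]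
  + (min{M,L}-1)/(ML(e^{-γ}-e^{-2γ})) + e^{-e^γ}`. -/
theorem one_shot_conditional_mutual_covering
    {Ω 𝓤 𝓢 𝓣 : Type*} [MeasurableSpace Ω] [MeasurableSpace 𝓤]
    [MeasurableSpace 𝓢] [MeasurableSpace 𝓣]
    (P : Measure Ω) [IsProbabilityMeasure P]
    (μUST : Measure (𝓤 × 𝓢 × 𝓣)) [IsProbabilityMeasure μUST]
    (μU : Measure 𝓤) [IsProbabilityMeasure μU]
    (hμU : μUST.map (fun p => p.1) = μU)
    (κS : Kernel 𝓤 𝓢) [IsMarkovKernel κS]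
    (κT : Kernel 𝓤 𝓣) [IsMarkovKernel κT]
    (κST : Kernel 𝓤 (𝓢 × 𝓣)) [IsMarkovKernel κST]
    (hS : μUST.map (fun p => (p.1, p.2.1)) = μU ⊗ₘ κS)
    (hT : μUST.map (fun p => (p.1, p.2.2)) = μU ⊗ₘ κT)
    (hST : μUST = μU ⊗ₘ κST)
    (iST : 𝓤 → 𝓢 → 𝓣 → ℝ) (hi : Measurable fun p : 𝓤 × 𝓢 × 𝓣 => iST p.1 p.2.1 p.2.2)
    (hdens : ∀ᵐ u ∂μU,
      κST u = ((κS u).prod (κT u)).withDensity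
        (fun st => ENNReal.ofReal (Real.exp (iST u st.1 st.2))))
    (M L : ℕ) (hM : 0 < M) (hL : 0 < L)
    (U : Ω → 𝓤) (S : Fin M → Ω → 𝓢) (T : Fin L → Ω → 𝓣)
    (hU : Measurable U) (hSm : ∀ m, Measurable (S m)) (hTl : ∀ l, Measurable (T l))
    (κMT : Kernel 𝓤 ((Fin M → 𝓢) × (Fin L → 𝓣)))
    (hκMT : ∀ u, κMT u = (Measure.pi fun _ : Fin M => κS u).prod
        (Measure.pi fun _ : Fin L => κT u))
    (hlaw : P.map (fun ω => (U ω, ((fun m => S m ω), (fun l => T l ω)))) = μU ⊗ₘ κMT)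
    (F : Set (𝓤 × 𝓢 × 𝓣)) (hF : MeasurableSet F)
    (γ : ℝ) (hγ : 0 < γ) :
    (P {ω | ∀ m l, (U ω, S m ω, T l ω) ∉ F}).toReal
      ≤ (μUST (Fᶜ ∪ {p | iST p.1 p.2.1 p.2.2 > Real.log ((M : ℝ) * (L : ℝ)) - 2 * γ})).toReal
        + (min (M : ℝ) (L : ℝ) - 1)
            / ((M : ℝ) * (L : ℝ) * (Real.exp (-γ) - Real.exp (-2 * γ)))
        + Real.exp (-Real.exp γ) := by
  classical
  have hMR : (0:ℝ) < M := by exact_mod_cast hM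
  have hLR : (0:ℝ) < L := by exact_mod_cast hL
  have hdpos : (0:ℝ) < Real.exp (-γ) - Real.exp (-(2*γ)) := by
    have h1 : -(2*γ) < -γ := by linarith
    have := Real.exp_lt_exp.mpr h1; linarith
  simp only [show (-2 : ℝ) * γ = -(2*γ) by ring]
  set c : ℝ := Real.log ((M:ℝ) * L) - 2 * γ with hc
  set f : 𝓤 × 𝓢 × 𝓣 → ℝ≥0∞ :=
    fun q => ENNReal.ofReal (Real.exp (iST q.1 q.2.1 q.2.2)) with hfd
  have hfmeas : Measurable f := ENNReal.measurable_ofReal.comp (Real.measurable_exp.comp hi)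
  have hdens' : ∀ᵐ u ∂μU, κST u
      = ((κS u).prod (κT u)).withDensity (fun st => f (u, st.1, st.2)) := by
    filter_upwards [hdens] with u hu
    exact hu
  have hmargS := marg_one μUST μU κS κT κST hS hST f hfmeas hdens'
  have hmargT := marg_one' μUST μU κS κT κST hT hST f hfmeas hdens'
  set Eset : Set (𝓤 × 𝓢 × 𝓣) := Fᶜ ∪ {p | iST p.1 p.2.1 p.2.2 > c} with hEdef
  have hEm : MeasurableSet Eset := hF.compl.union (measurableSet_lt measurable_const hi)
  set r2 : ℝ := (min (M:ℝ) (L:ℝ) - 1) / ((M:ℝ) * L * (Real.exp (-γ) - Real.exp (-(2*γ))))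
    with hr2def
  have hr2nn : 0 ≤ r2 := by
    apply div_nonneg
    · have h1 : (1:ℝ) ≤ min (M:ℝ) (L:ℝ) :=
        le_min (by exact_mod_cast hM) (by exact_mod_cast hL)
      linarith
    · exact (mul_pos (mul_pos hMR hLR) hdpos).le
  set r3 : ℝ := Real.exp (-Real.exp γ) with hr3def
  set φmap : Ω → 𝓤 × ((Fin M → 𝓢) × (Fin L → 𝓣)) :=
    fun ω => (U ω, ((fun m => S m ω), (fun l => T l ω))) with hφdef
  have hφm : Measurable φmap :=
    hU.prodMk ((measurable_pi_lambda _ hSm).prodMk (measurable_pi_lambda _ hTl))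
  set A : Set (𝓤 × ((Fin M → 𝓢) × (Fin L → 𝓣))) :=
    {q | ∀ m l, (q.1, q.2.1 m, q.2.2 l) ∉ F} with hAdef
  have hAm : MeasurableSet A := by
    have : A = ⋂ m, ⋂ l, (fun q : 𝓤 × ((Fin M → 𝓢) × (Fin L → 𝓣)) =>
        (q.1, q.2.1 m, q.2.2 l)) ⁻¹' Fᶜ := by
      ext q; simp [hAdef]
    rw [this]
    exact MeasurableSet.iInter fun m => MeasurableSet.iInter fun l =>
      hF.compl.preimage (measurable_fst.prodMk
        (((measurable_pi_apply m).comp (measurable_fst.comp measurable_snd)).prodMk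
          ((measurable_pi_apply l).comp (measurable_snd.comp measurable_snd))))
  have hmain : P {ω | ∀ m l, (U ω, S m ω, T l ω) ∉ F}
      ≤ μUST Eset + ENNReal.ofReal r2 + ENNReal.ofReal r3 := by
    have hκMTmk : IsMarkovKernel κMT := by
      constructor
      intro u
      rw [hκMT u]
      infer_instance
    have hPA : P {ω | ∀ m l, (U ω, S m ω, T l ω) ∉ F} = (μU ⊗ₘ κMT) A := by
      rw [← hlaw, Measure.map_apply hφm hAm]
      congr 1
    have hE : μUST Eset = ∫⁻ u, κST u (Prod.mk u ⁻¹' Eset) ∂μU := by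
      rw [hST, Measure.compProd_apply hEm]
    rw [hPA, hE, Measure.compProd_apply hAm]
    have hbound : ∀ᵐ u ∂μU, κMT u (Prod.mk u ⁻¹' A)
        ≤ κST u (Prod.mk u ⁻¹' Eset) + ENNReal.ofReal r2 + ENNReal.ofReal r3 := by
      filter_upwards [hdens', hmargS, hmargT] with u hu hm1 hm2
      set Gu : Set (𝓢 × 𝓣) := {st | (u, st.1, st.2) ∈ F ∧ iST u st.1 st.2 ≤ c} with hGud
      have hfum : Measurable (fun st : 𝓢 × 𝓣 => f (u, st.1, st.2)) :=
        hfmeas.comp (measurable_const.prodMk measurable_id)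
      have hGum : MeasurableSet Gu := by
        have h1 : MeasurableSet {st : 𝓢 × 𝓣 | (u, st.1, st.2) ∈ F} :=
          hF.preimage (measurable_const.prodMk measurable_id)
        have h2 : MeasurableSet {st : 𝓢 × 𝓣 | iST u st.1 st.2 ≤ c} :=
          measurableSet_le (hi.comp (measurable_const.prodMk measurable_id)) measurable_const
        exact h1.inter h2
      have hsub : Prod.mk u ⁻¹' A
          ⊆ {p : (Fin M → 𝓢) × (Fin L → 𝓣) | ∀ m l, (p.1 m, p.2 l) ∉ Gu} := by
        intro p hp m l hmem
        exact hp m l hmem.1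
      have hfG : ∀ st ∈ Gu, (fun st : 𝓢 × 𝓣 => f (u, st.1, st.2)) st
          ≤ ENNReal.ofReal ((M:ℝ) * L * Real.exp (-(2*γ))) := by
        intro st hst
        apply ENNReal.ofReal_le_ofReal
        calc Real.exp (iST u st.1 st.2) ≤ Real.exp c := Real.exp_le_exp.mpr hst.2
          _ = (M:ℝ) * L * Real.exp (-(2*γ)) := by
              rw [hc, Real.exp_sub, Real.exp_log (by positivity), Real.exp_neg]
              rw [div_eq_mul_inv]
      have hcompl : Prod.mk u ⁻¹' Eset = Guᶜ := by
        ext st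
        simp only [hEdef, hGud, Set.mem_preimage, Set.mem_union, Set.mem_compl_iff,
          Set.mem_setOf_eq, not_and_or, not_le, gt_iff_lt]
      have happ := aux_cover_min (κS u) (κT u) (fun st : 𝓢 × 𝓣 => f (u, st.1, st.2))
        hfum hm1 hm2 Gu hGum M L hM hL γ hγ hfG
      rw [hκMT u]
      calc ((Measure.pi fun _ : Fin M => κS u).prod (Measure.pi fun _ : Fin L => κT u))
            (Prod.mk u ⁻¹' A)
          ≤ ((Measure.pi fun _ : Fin M => κS u).prod (Measure.pi fun _ : Fin L => κT u))
            {p : (Fin M → 𝓢) × (Fin L → 𝓣) | ∀ m l, (p.1 m, p.2 l) ∉ Gu} :=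
            measure_mono hsub
        _ ≤ (((κS u).prod (κT u)).withDensity (fun st => f (u, st.1, st.2))) Guᶜ
              + ENNReal.ofReal r2 + ENNReal.ofReal r3 := happ
        _ = κST u (Prod.mk u ⁻¹' Eset) + ENNReal.ofReal r2 + ENNReal.ofReal r3 := by
            rw [hcompl, ← hu]
    calc ∫⁻ u, κMT u (Prod.mk u ⁻¹' A) ∂μU
        ≤ ∫⁻ u, (κST u (Prod.mk u ⁻¹' Eset) + ENNReal.ofReal r2 + ENNReal.ofReal r3) ∂μU :=
          lintegral_mono_ae hbound
      _ = (∫⁻ u, κST u (Prod.mk u ⁻¹' Eset) ∂μU) + ENNReal.ofReal r2 + ENNReal.ofReal r3 := by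
          rw [lintegral_add_right _ measurable_const, lintegral_add_right _ measurable_const]
          simp
  have hfinE : μUST Eset ≠ ∞ := measure_ne_top _ _
  have hfinRHS : μUST Eset + ENNReal.ofReal r2 + ENNReal.ofReal r3 ≠ ∞ :=
    ENNReal.add_ne_top.mpr ⟨ENNReal.add_ne_top.mpr ⟨hfinE, ENNReal.ofReal_ne_top⟩,
      ENNReal.ofReal_ne_top⟩
  have hto := ENNReal.toReal_mono hfinRHS hmain
  rw [ENNReal.toReal_add (ENNReal.add_ne_top.mpr ⟨hfinE, ENNReal.ofReal_ne_top⟩)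
      ENNReal.ofReal_ne_top,
    ENNReal.toReal_add hfinE ENNReal.ofReal_ne_top,
    ENNReal.toReal_ofReal hr2nn, ENNReal.toReal_ofReal (Real.exp_nonneg _)] at hto
  exact hto
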